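/- Let L(x) = -π²/6 - (1/2)∫_0^x (log(t)/(1-t) + log(1-t)/t) dt be the Rogers dilogarithm on the cut plane ℂ \ ((-∞,0] ∪ [1,∞)). For real x, y with 0 < y < x < 1, the Schaeffer five-term identity holds: L(x) - L(y) + L(y/x) - L((1-x^{-1})/(1-y^{-1})) + L((1-x)/(1-y)) = 0. -/

import Mathlib

open Real MeasureTheory Filter Set Topology

/-- The Rogers dilogarithm (real version):
`L(x) = -π²/6 - (1/2)∫₀ˣ (log t/(1-t) + log(1-t)/t) dt`. -/
noncomputable def rogersL (x : ℝ) : ℝ :=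
  -(π ^ 2 / 6) - (1 / 2) * ∫ t in (0:ℝ)..x, (Real.log t / (1 - t) + Real.log (1 - t) / t)

namespace RogersAux

noncomputable def rfn (t : ℝ) : ℝ := Real.log t / (1 - t) + Real.log (1 - t) / t

lemma rogersL_eq (u : ℝ) :
    rogersL u = -(π ^ 2 / 6) - (1 / 2) * ∫ t in (0:ℝ)..u, rfn t := rfl

lemma rogersL_fun_eq :
    rogersL = fun u => -(π ^ 2 / 6) - (1 / 2) * ∫ t in (0:ℝ)..u, rfn t :=
  funext rogersL_eq

lemma bound1 {t : ℝ} (h0 : 0 < t) (h1 : t < 1) :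
    |Real.log t / (1 - t)| ≤ 2 * (-Real.log t) + 2 := by
  have h1t : 0 < 1 - t := by linarith
  have habs : |Real.log t| = -Real.log t := abs_of_nonpos (Real.log_nonpos h0.le h1.le)
  rw [abs_div, abs_of_pos h1t, habs, div_le_iff₀ h1t]
  have hlog : 0 ≤ -Real.log t := by
    rw [← habs]; exact abs_nonneg _
  rcases le_or_gt t (1/2) with h | h
  · nlinarith
  · have h2 : Real.log t⁻¹ ≤ t⁻¹ - 1 := Real.log_le_sub_one_of_pos (inv_pos.2 h0)
    rw [Real.log_inv] at h2
    have hinv : t⁻¹ ≤ 2 := by rw [inv_eq_one_div, div_le_iff₀ h0]; linarith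
    have htt : t * t⁻¹ = 1 := mul_inv_cancel₀ h0.ne'
    nlinarith

lemma bound2 {t : ℝ} (h0 : 0 < t) (h1 : t < 1) :
    |Real.log (1 - t) / t| ≤ 2 * (-Real.log (1 - t)) + 2 := by
  have := bound1 (t := 1 - t) (by linarith) (by linarith)
  simpa [sub_sub_cancel] using this

lemma intOn_neg_log : IntegrableOn (fun t => -Real.log t) (Ioc (0:ℝ) 1) volume := by
  apply intervalIntegral.integrableOn_deriv_of_nonneg (g := fun t => t - t * Real.log t)
  · exact (continuous_id.sub Real.continuous_mul_log).continuousOn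
  · intro t ht
    have h1 := Real.hasDerivAt_mul_log ht.1.ne'
    have h2 := (hasDerivAt_id t).sub h1
    refine h2.congr_deriv ?_
    ring
  · intro t ht
    simp only [neg_nonneg]
    exact Real.log_nonpos ht.1.le ht.2.le

lemma intOn_neg_log1 : IntegrableOn (fun t => -Real.log (1 - t)) (Ioc (0:ℝ) 1) volume := by
  apply intervalIntegral.integrableOn_deriv_of_nonneg (g := fun t => (1 - t) * Real.log (1 - t) + t)
  · exact ((Real.continuous_mul_log.comp (continuous_const.sub continuous_id)).add
      continuous_id).continuousOn
  · intro t ht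
    have hne : (1:ℝ) - t ≠ 0 := by
      have : (0:ℝ) < 1 - t := by linarith [ht.2]
      exact this.ne'
    have houter := Real.hasDerivAt_mul_log hne
    have hinner : HasDerivAt (fun s : ℝ => 1 - s) (-1) t := by
      simpa using (hasDerivAt_id t).const_sub 1
    have h2 := (houter.comp t hinner).add (hasDerivAt_id t)
    refine h2.congr_deriv ?_
    ring
  · intro t ht
    simp only [neg_nonneg]
    exact Real.log_nonpos (by linarith [ht.2]) (by linarith [ht.1])

lemma I1 : IntegrableOn (fun t => Real.log t / (1 - t)) (Ioo (0:ℝ) 1) volume := by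
  apply Integrable.mono' (g := fun t => 2 * (-Real.log t) + 2)
  · exact ((intOn_neg_log.mono_set Ioo_subset_Ioc_self).const_mul 2).add
      (integrableOn_const measure_Ioo_lt_top.ne)
  · exact (Real.measurable_log.div (measurable_const.sub measurable_id)).aestronglyMeasurable
  · filter_upwards [ae_restrict_mem measurableSet_Ioo] with t ht
    rw [Real.norm_eq_abs]
    exact bound1 ht.1 ht.2

lemma I2 : IntegrableOn (fun t => Real.log (1 - t) / t) (Ioo (0:ℝ) 1) volume := by
  apply Integrable.mono' (g := fun t => 2 * (-Real.log (1 - t)) + 2)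
  · exact ((intOn_neg_log1.mono_set Ioo_subset_Ioc_self).const_mul 2).add
      (integrableOn_const measure_Ioo_lt_top.ne)
  · exact ((Real.measurable_log.comp (measurable_const.sub measurable_id)).div
      measurable_id).aestronglyMeasurable
  · filter_upwards [ae_restrict_mem measurableSet_Ioo] with t ht
    rw [Real.norm_eq_abs]
    exact bound2 ht.1 ht.2

lemma Irfn : IntegrableOn rfn (Ioo (0:ℝ) 1) volume := I1.add I2

lemma II : IntervalIntegrable rfn volume 0 1 := by
  rw [intervalIntegrable_iff_integrableOn_Ioo_of_le zero_le_one]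
  exact Irfn

lemma II' {u v : ℝ} (hu : u ∈ Icc (0:ℝ) 1) (hv : v ∈ Icc (0:ℝ) 1) :
    IntervalIntegrable rfn volume u v :=
  II.mono_set (by rw [uIcc_of_le zero_le_one]; exact uIcc_subset_Icc hu hv)

lemma rfn_meas : Measurable rfn :=
  (Real.measurable_log.div (measurable_const.sub measurable_id)).add
    ((Real.measurable_log.comp (measurable_const.sub measurable_id)).div measurable_id)

lemma hasDerivAt_rogersL {u : ℝ} (h0 : 0 < u) (h1 : u < 1) :
    HasDerivAt rogersL (-(1/2) * rfn u) u := by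
  have hu0 : u ≠ 0 := h0.ne'
  have hu1 : (1:ℝ) - u ≠ 0 := by
    have : (0:ℝ) < 1 - u := by linarith
    exact this.ne'
  have hcont : ContinuousAt rfn u := by
    apply ContinuousAt.add
    · exact (Real.continuousAt_log hu0).div
        ((continuous_const.sub continuous_id).continuousAt) hu1
    · exact ((Real.continuousAt_log hu1).comp
        ((continuous_const.sub continuous_id).continuousAt)).div continuousAt_id hu0
  have hint : IntervalIntegrable rfn volume 0 u :=
    II' ⟨le_refl 0, zero_le_one⟩ ⟨h0.le, h1.le⟩
  have hmeas : StronglyMeasurableAtFilter rfn (𝓝 u) :=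
    ⟨univ, univ_mem, rfn_meas.aestronglyMeasurable⟩
  have h := intervalIntegral.integral_hasDerivAt_right hint hmeas hcont
  have h2 := (h.const_mul (1/2 : ℝ)).const_sub (-(π ^ 2 / 6))
  rw [rogersL_fun_eq]
  refine h2.congr_deriv ?_
  ring

lemma contOn_rogersL : ContinuousOn rogersL (Icc 0 1) := by
  have hI : IntegrableOn rfn (uIcc (0:ℝ) 1) volume := by
    rw [uIcc_of_le zero_le_one, integrableOn_Icc_iff_integrableOn_Ioo]
    exact Irfn
  have h := intervalIntegral.continuousOn_primitive_interval (a := (0:ℝ)) (b := 1)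
    (μ := volume) hI
  rw [uIcc_of_le zero_le_one] at h
  rw [rogersL_fun_eq]
  exact continuousOn_const.sub (continuousOn_const.mul h)

lemma sum_inv_sq : HasSum (fun n : ℕ => 1 / ((n:ℝ) + 1) ^ 2) (π ^ 2 / 6) := by
  have h2 := (hasSum_nat_add_iff' (f := fun n : ℕ => (1:ℝ) / (n:ℝ) ^ 2) 1).2 hasSum_zeta_two
  simp only [Finset.range_one, Finset.sum_singleton, Nat.cast_zero, Nat.cast_add,
    Nat.cast_one] at h2
  norm_num at h2
  simpa [one_div] using h2

lemma int_pow_val (n : ℕ) :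
    ∫ t in Ioo (0:ℝ) 1, t ^ n / ((n:ℝ) + 1) = 1 / ((n:ℝ) + 1) ^ 2 := by
  rw [← integral_Ioc_eq_integral_Ioo, ← intervalIntegral.integral_of_le zero_le_one,
    intervalIntegral.integral_div, integral_pow]
  have hn : ((n:ℝ) + 1) ≠ 0 := by positivity
  rw [one_pow, zero_pow (Nat.succ_ne_zero n)]
  field_simp
  ring

lemma int_log_one_sub_div : ∫ t in (0:ℝ)..1, Real.log (1 - t) / t = -(π ^ 2 / 6) := by
  rw [intervalIntegral.integral_of_le zero_le_one, integral_Ioc_eq_integral_Ioo]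
  have hptwise : EqOn (fun t => Real.log (1 - t) / t)
      (fun t => -∑' n : ℕ, t ^ n / ((n:ℝ) + 1)) (Ioo (0:ℝ) 1) := by
    intro t ht
    have habs : |t| < 1 := by rw [abs_of_pos ht.1]; exact ht.2
    have h := (Real.hasSum_pow_div_log_of_abs_lt_one habs).div_const t
    have h2 : HasSum (fun n : ℕ => t ^ n / ((n:ℝ) + 1)) (-Real.log (1 - t) / t) := by
      convert h using 2 with n
      case e'_3 => rfl
      rw [pow_succ, div_div, mul_comm ((n:ℝ) + 1) t, mul_comm (t ^ n) t,
        mul_div_mul_left _ _ ht.1.ne']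
    simp only
    rw [h2.tsum_eq, neg_div, neg_neg]
  rw [setIntegral_congr_fun measurableSet_Ioo hptwise, integral_neg]
  have hmeas : ∀ n : ℕ, AEStronglyMeasurable (fun t : ℝ => t ^ n / ((n:ℝ) + 1))
      (volume.restrict (Ioo (0:ℝ) 1)) :=
    fun n => ((continuous_pow n).div_const _).aestronglyMeasurable
  have hfin : ∑' n : ℕ, ∫⁻ t in Ioo (0:ℝ) 1, ‖(t:ℝ) ^ n / ((n:ℝ) + 1)‖ₑ ≠ ⊤ := by
    have heach : ∀ n : ℕ, ∫⁻ t in Ioo (0:ℝ) 1, ‖(t:ℝ) ^ n / ((n:ℝ) + 1)‖ₑ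
        = ENNReal.ofReal (1 / ((n:ℝ) + 1) ^ 2) := by
      intro n
      have hInt : IntegrableOn (fun t : ℝ => t ^ n / ((n:ℝ) + 1)) (Ioo (0:ℝ) 1) volume :=
        (((continuous_pow n).div_const _).integrableOn_Icc (a := 0) (b := 1)).mono_set
          Ioo_subset_Icc_self
      rw [← ofReal_integral_norm_eq_lintegral_enorm hInt]
      congr 1
      rw [← int_pow_val n]
      apply setIntegral_congr_fun measurableSet_Ioo
      intro t ht
      simp only [Real.norm_eq_abs]
      exact abs_of_nonneg (div_nonneg (pow_nonneg ht.1.le n) (by positivity))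
    rw [tsum_congr heach, ← ENNReal.ofReal_tsum_of_nonneg (fun n => by positivity)
      sum_inv_sq.summable]
    exact ENNReal.ofReal_ne_top
  rw [integral_tsum hmeas hfin, tsum_congr int_pow_val, sum_inv_sq.tsum_eq]

lemma int_log_div_one_sub : ∫ t in (0:ℝ)..1, Real.log t / (1 - t) = -(π ^ 2 / 6) := by
  have h := intervalIntegral.integral_comp_sub_left (a := (0:ℝ)) (b := 1)
    (fun t => Real.log t / (1 - t)) 1
  simp only [sub_sub_cancel, sub_self, sub_zero] at h
  rw [← h, int_log_one_sub_div]

lemma rogersL_one : rogersL 1 = 0 := by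
  have hA : IntervalIntegrable (fun t : ℝ => Real.log t / (1 - t)) volume 0 1 := by
    rw [intervalIntegrable_iff_integrableOn_Ioo_of_le zero_le_one]; exact I1
  have hB : IntervalIntegrable (fun t : ℝ => Real.log (1 - t) / t) volume 0 1 := by
    rw [intervalIntegrable_iff_integrableOn_Ioo_of_le zero_le_one]; exact I2
  have hsplit : ∫ t in (0:ℝ)..1, rfn t
      = (∫ t in (0:ℝ)..1, Real.log t / (1 - t)) + ∫ t in (0:ℝ)..1, Real.log (1 - t) / t :=
    intervalIntegral.integral_add hA hB
  rw [rogersL_eq, hsplit, int_log_div_one_sub, int_log_one_sub_div]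
  ring

end RogersAux

open RogersAux

/-- The Schaeffer five-term identity for the Rogers dilogarithm: for real
`0 < y < x < 1`,
`L(x) - L(y) + L(y/x) - L((1-x⁻¹)/(1-y⁻¹)) + L((1-x)/(1-y)) = 0`. -/
theorem rogers_schaeffer_identity (x y : ℝ) (hy : 0 < y) (hyx : y < x) (hx : x < 1) :
    rogersL x - rogersL y + rogersL (y / x)
      - rogersL ((1 - x⁻¹) / (1 - y⁻¹)) + rogersL ((1 - x) / (1 - y)) = 0 := by
  have hx0 : (0:ℝ) < x := hy.trans hyx
  have hy1 : y < 1 := hyx.trans hx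
  have h1y : (0:ℝ) < 1 - y := by linarith
  have h1x : (0:ℝ) < 1 - x := by linarith
  have harg : (1 - x⁻¹) / (1 - y⁻¹) = y * (1 - x) / (x * (1 - y)) := by
    rw [div_eq_div_iff]
    · field_simp
      ring
    · have : 1 - y⁻¹ < 0 := by
        rw [sub_neg]
        exact (one_lt_inv_iff₀).2 ⟨hy, hy1⟩
      exact this.ne
    · exact (mul_pos hx0 h1y).ne'
  rw [harg]
  set F : ℝ → ℝ := fun z => rogersL x - rogersL z + rogersL (z / x)
      - rogersL (z * (1 - x) / (x * (1 - z))) + rogersL ((1 - x) / (1 - z)) with hFdef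
  show F y = 0
  have hderiv : ∀ z ∈ Ioo (0:ℝ) x, HasDerivAt F 0 z := by
    intro z hzm
    obtain ⟨hz0, hzx⟩ := hzm
    have hz1 : z < 1 := hzx.trans hx
    have h1z : (0:ℝ) < 1 - z := by linarith
    have hxz : (0:ℝ) < x - z := by linarith
    have m1 : 0 < z / x := div_pos hz0 hx0
    have m1' : z / x < 1 := (div_lt_one hx0).2 hzx
    have hden : (0:ℝ) < x * (1 - z) := mul_pos hx0 h1z
    have m2 : 0 < z * (1 - x) / (x * (1 - z)) := div_pos (mul_pos hz0 h1x) hden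
    have m2' : z * (1 - x) / (x * (1 - z)) < 1 := (div_lt_one hden).2 (by nlinarith)
    have m3 : 0 < (1 - x) / (1 - z) := div_pos h1x h1z
    have m3' : (1 - x) / (1 - z) < 1 := (div_lt_one h1z).2 (by linarith)
    have d1 := hasDerivAt_rogersL hz0 hz1
    have i2 : HasDerivAt (fun w : ℝ => w / x) (1 / x) z := (hasDerivAt_id z).div_const x
    have d2 := (hasDerivAt_rogersL m1 m1').comp z i2
    have ic : HasDerivAt (fun w : ℝ => w * (1 - x)) (1 * (1 - x)) z :=
      (hasDerivAt_id z).mul_const (1 - x)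
    have idd : HasDerivAt (fun w : ℝ => x * (1 - w)) (x * -1) z :=
      ((hasDerivAt_id z).const_sub 1).const_mul x
    have iG := ic.div idd hden.ne'
    have d3 := (hasDerivAt_rogersL m2 m2').comp z iG
    have iH := (hasDerivAt_const z (1 - x)).div ((hasDerivAt_id z).const_sub 1) h1z.ne'
    have d4 := (hasDerivAt_rogersL m3 m3').comp z iH
    have dF := ((((hasDerivAt_const z (rogersL x)).sub d1).add d2).sub d3).add d4
    simp only [Function.comp_def] at dF
    refine dF.congr_deriv ?_
    symm
    simp only [rfn, id]
    have e1 : 1 - z / x = (x - z) / x := by field_simp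
    have e2 : 1 - z * (1 - x) / (x * (1 - z)) = (x - z) / (x * (1 - z)) := by
      field_simp
      ring
    have e3 : 1 - (1 - x) / (1 - z) = (x - z) / (1 - z) := by
      field_simp
      ring
    rw [e1, e2, e3, Real.log_div hz0.ne' hx0.ne', Real.log_div hxz.ne' hx0.ne',
      Real.log_div (mul_pos hz0 h1x).ne' hden.ne', Real.log_div hxz.ne' hden.ne',
      Real.log_div h1x.ne' h1z.ne', Real.log_div hxz.ne' h1z.ne',
      Real.log_mul hz0.ne' h1x.ne', Real.log_mul hx0.ne' h1z.ne']
    field_simp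
    ring
  have hIccsub : ∀ z ∈ Ioo y x, Icc y z ⊆ Ioo (0:ℝ) x := by
    intro z hz w hw
    exact ⟨lt_of_lt_of_le hy hw.1, lt_of_le_of_lt hw.2 hz.2⟩
  have key : ∀ z ∈ Ioo y x, F z = F y := by
    intro z hz
    have hcont : ContinuousOn F (Icc y z) := fun w hw =>
      ((hderiv w (hIccsub z hz hw)).continuousAt).continuousWithinAt
    have hder : ∀ w ∈ Ico y z, HasDerivWithinAt F 0 (Ici w) w := fun w hw =>
      (hderiv w (hIccsub z hz ⟨hw.1, hw.2.le⟩)).hasDerivWithinAt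
    exact constant_of_has_deriv_right_zero hcont hder z ⟨hz.1.le, le_refl z⟩
  haveI hne : (𝓝[Ioo y x] x).NeBot := right_nhdsWithin_Ioo_neBot hyx
  have hx01 : x ∈ Icc (0:ℝ) 1 := ⟨hx0.le, hx.le⟩
  have h101 : (1:ℝ) ∈ Icc (0:ℝ) 1 := ⟨zero_le_one, le_refl 1⟩
  have hsub : Ioo y x ⊆ Icc (0:ℝ) 1 := fun w hw =>
    ⟨by linarith [hw.1], by linarith [hw.2]⟩
  have comp_tend : ∀ (g : ℝ → ℝ) (b : ℝ), b ∈ Icc (0:ℝ) 1 →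
      Tendsto g (𝓝[Ioo y x] x) (𝓝 b) → (∀ w ∈ Ioo y x, g w ∈ Icc (0:ℝ) 1) →
      Tendsto (fun z => rogersL (g z)) (𝓝[Ioo y x] x) (𝓝 (rogersL b)) := by
    intro g b hb hg hmaps
    have h1 : Tendsto g (𝓝[Ioo y x] x) (𝓝[Icc (0:ℝ) 1] b) :=
      tendsto_nhdsWithin_iff.2 ⟨hg, eventually_mem_nhdsWithin.mono fun w hw => hmaps w hw⟩
    exact (contOn_rogersL b hb).tendsto.comp h1
  have T1 : Tendsto (fun z : ℝ => rogersL z) (𝓝[Ioo y x] x) (𝓝 (rogersL x)) :=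
    comp_tend (fun z => z) x hx01 (tendsto_id.mono_left nhdsWithin_le_nhds) fun w hw => hsub hw
  have T2 : Tendsto (fun z : ℝ => rogersL (z / x)) (𝓝[Ioo y x] x) (𝓝 (rogersL 1)) := by
    apply comp_tend _ _ h101
    · have : Tendsto (fun z : ℝ => z / x) (𝓝 x) (𝓝 (x / x)) :=
        (continuous_id.div_const x).tendsto x
      rw [div_self hx0.ne'] at this
      exact this.mono_left nhdsWithin_le_nhds
    · intro w hw
      have hw0 : 0 < w := hy.trans hw.1
      exact ⟨(div_pos hw0 hx0).le, ((div_lt_one hx0).2 hw.2).le⟩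
  have T3 : Tendsto (fun z : ℝ => rogersL (z * (1 - x) / (x * (1 - z)))) (𝓝[Ioo y x] x)
      (𝓝 (rogersL 1)) := by
    apply comp_tend _ _ h101
    · have hc : ContinuousAt (fun z : ℝ => z * (1 - x) / (x * (1 - z))) x := by
        apply ContinuousAt.div
        · exact continuousAt_id.mul continuousAt_const
        · exact continuousAt_const.mul (continuousAt_const.sub continuousAt_id)
        · exact (mul_pos hx0 h1x).ne'
      have := hc.tendsto
      rw [show x * (1 - x) / (x * (1 - x)) = 1 from div_self (mul_pos hx0 h1x).ne'] at this
      exact this.mono_left nhdsWithin_le_nhds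
    · intro w hw
      have hw0 : 0 < w := hy.trans hw.1
      have h1w : (0:ℝ) < 1 - w := by linarith [hw.2]
      have hdenw : (0:ℝ) < x * (1 - w) := mul_pos hx0 h1w
      constructor
      · exact (div_pos (mul_pos hw0 h1x) hdenw).le
      · exact ((div_lt_one hdenw).2 (by nlinarith [hw.2])).le
  have T4 : Tendsto (fun z : ℝ => rogersL ((1 - x) / (1 - z))) (𝓝[Ioo y x] x)
      (𝓝 (rogersL 1)) := by
    apply comp_tend _ _ h101
    · have hc : ContinuousAt (fun z : ℝ => (1 - x) / (1 - z)) x := by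
        apply ContinuousAt.div
        · exact continuousAt_const
        · exact continuousAt_const.sub continuousAt_id
        · exact h1x.ne'
      have := hc.tendsto
      rw [show (1 - x) / (1 - x) = 1 from div_self h1x.ne'] at this
      exact this.mono_left nhdsWithin_le_nhds
    · intro w hw
      have h1w : (0:ℝ) < 1 - w := by linarith [hw.2]
      exact ⟨(div_pos h1x h1w).le, ((div_lt_one h1w).2 (by linarith [hw.2])).le⟩
  have hlim : Tendsto F (𝓝[Ioo y x] x)
      (𝓝 (rogersL x - rogersL x + rogersL 1 - rogersL 1 + rogersL 1)) :=
    (((((tendsto_const_nhds : Tendsto (fun _ : ℝ => rogersL x) (𝓝[Ioo y x] x) (𝓝 (rogersL x)))).sub T1).add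
      T2).sub T3).add T4
  rw [show rogersL x - rogersL x + rogersL 1 - rogersL 1 + rogersL 1 = 0 by
    rw [rogersL_one]; ring] at hlim
  have hconst : Tendsto F (𝓝[Ioo y x] x) (𝓝 (F y)) := by
    refine Tendsto.congr' ?_ tendsto_const_nhds
    filter_upwards [self_mem_nhdsWithin] with z hz
    exact (key z hz).symm
  exact tendsto_nhds_unique hconst hlim
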